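/- Let m, n be positive integers and let F be a binary image contained in {1,…,m} × {1,…,n} with row sums r_1,…,r_m and column sums c_1,…,c_n. Define b_i = #{j ∈ {1,…,n} : c_j ≥ i} and d_i = b_i − r_i for i = 1,…,m, set d_0 = d_{m+1} = 0, and let L_h be the length of the horizontal boundary of F. Then for every integer t ≥ 0 and every choice of indices 0 ≤ i_1 < i_2 < ⋯ < i_{2t+1} ≤ m+1 one has L_h ≥ 2·r_1 + Σ_{s=1}^{t} (d_{i_{2s−1}} − d_{i_{2s}}) + 2·d_{i_{2t+1}}. -/

import Mathlib

/-- The row sum `r i` of a binary image `F`: the number of points of `F` in row `i`. -/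
def rowSum (F : Finset (ℤ × ℤ)) (i : ℤ) : ℕ := (F.filter fun p => p.1 = i).card

/-- The column sum `c j` of a binary image `F`: the number of points of `F` in column `j`. -/
def colSum (F : Finset (ℤ × ℤ)) (j : ℤ) : ℕ := (F.filter fun p => p.2 = j).card

/-- The length of the horizontal boundary of `F`: the number of pairs
`((i,j),(i',j'))` with `j = j'`, `|i - i'| = 1`, `(i,j) ∈ F` and `(i',j') ∉ F`. -/
noncomputable def horizBoundaryLen (F : Finset (ℤ × ℤ)) : ℕ :=
  Set.ncard {q : (ℤ × ℤ) × (ℤ × ℤ) |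
    q.1.2 = q.2.2 ∧ |q.1.1 - q.2.1| = 1 ∧ q.1 ∈ F ∧ q.2 ∉ F}

open Finset

namespace Bdry

/-- indicator-difference function of a column set -/
def fcol (S : Finset ℤ) (i : ℤ) : ℤ :=
  (if 1 ≤ i ∧ i ≤ (S.card : ℤ) then 1 else 0) - (if i ∈ S then 1 else 0)

/-- positions k with exactly one of k, k+1 in S -/
def edges (S : Finset ℤ) : Finset ℤ :=
  (S ∪ S.image (fun k => k - 1)).filter
    (fun k => (k ∈ S ∧ k + 1 ∉ S) ∨ (k ∉ S ∧ k + 1 ∈ S))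

lemma mem_edges {S : Finset ℤ} {k : ℤ} :
    k ∈ edges S ↔ (k ∈ S ∧ k + 1 ∉ S) ∨ (k ∉ S ∧ k + 1 ∈ S) := by
  constructor
  · intro h; exact (mem_filter.mp h).2
  · intro h
    refine mem_filter.mpr ⟨?_, h⟩
    rcases h with ⟨h1, _⟩ | ⟨_, h2⟩
    · exact mem_union_left _ h1
    · exact mem_union_right _ (mem_image.mpr ⟨k + 1, h2, by ring⟩)

lemma le_card_of_Icc_subset {S : Finset ℤ} {v : ℤ} (h : Finset.Icc 1 v ⊆ S) :
    v ≤ (S.card : ℤ) := by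
  have h1 : (Finset.Icc (1:ℤ) v).card ≤ S.card := Finset.card_le_card h
  have h2 : (Finset.Icc (1:ℤ) v).card = (v + 1 - 1).toNat := Int.card_Icc 1 v
  have h3 : v ≤ ((v + 1 - 1).toNat : ℤ) := by
    have := Int.self_le_toNat (v + 1 - 1); omega
  omega

lemma closeSet_nonempty (S : Finset ℤ) (e : ℤ) :
    ((Finset.Icc e (e + S.card)).filter (fun k => k + 1 ∉ S)).Nonempty := by
  by_contra h
  rw [Finset.not_nonempty_iff_eq_empty, Finset.filter_eq_empty_iff] at h
  push_neg at h
  have hsub : (Finset.Icc e (e + S.card)).image (fun k => k + 1) ⊆ S := by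
    intro x hx
    obtain ⟨k, hk, rfl⟩ := mem_image.mp hx
    exact h hk
  have h1 : ((Finset.Icc e (e + S.card)).image (fun k => k + 1)).card ≤ S.card :=
    Finset.card_le_card hsub
  have h2 : ((Finset.Icc e (e + S.card)).image (fun k => k + 1)).card
      = (Finset.Icc e (e + S.card)).card :=
    Finset.card_image_of_injective _ (add_left_injective 1)
  have h3 : (Finset.Icc e (e + S.card)).card = (e + S.card + 1 - e).toNat :=
    Int.card_Icc _ _
  omega

/-- the closing edge of the run of `S` containing `e` -/
noncomputable def closeOf (S : Finset ℤ) (e : ℤ) : ℤ :=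
  ((Finset.Icc e (e + S.card)).filter (fun k => k + 1 ∉ S)).min' (closeSet_nonempty S e)

lemma le_closeOf (S : Finset ℤ) (e : ℤ) : e ≤ closeOf S e := by
  have := Finset.min'_mem _ (closeSet_nonempty S e)
  have := (Finset.mem_filter.mp this).1
  exact (Finset.mem_Icc.mp this).1

lemma closeOf_succ_not_mem (S : Finset ℤ) (e : ℤ) : closeOf S e + 1 ∉ S := by
  have := Finset.min'_mem _ (closeSet_nonempty S e)
  exact (Finset.mem_filter.mp this).2

lemma closeOf_interval {S : Finset ℤ} {e : ℤ} (he : e ∈ S) :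
    ∀ i, e ≤ i → i ≤ closeOf S e → i ∈ S := by
  intro i hei hiK
  by_contra hi
  have hne : i ≠ e := by rintro rfl; exact hi he
  have hK : closeOf S e ≤ e + S.card := by
    have := Finset.min'_mem _ (closeSet_nonempty S e)
    have := (Finset.mem_filter.mp this).1
    exact (Finset.mem_Icc.mp this).2
  have hmem : i - 1 ∈ (Finset.Icc e (e + S.card)).filter (fun k => k + 1 ∉ S) := by
    refine Finset.mem_filter.mpr ⟨Finset.mem_Icc.mpr ⟨by omega, by omega⟩, by
      simpa using hi⟩
  have := Finset.min'_le _ _ hmem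
  unfold closeOf at hiK
  omega

lemma closeOf_mem {S : Finset ℤ} {e : ℤ} (he : e ∈ S) : closeOf S e ∈ S :=
  closeOf_interval he _ (le_closeOf S e) le_rfl

lemma closeOf_mem_edges {S : Finset ℤ} {e : ℤ} (he : e ∈ S) : closeOf S e ∈ edges S :=
  mem_edges.mpr (Or.inl ⟨closeOf_mem he, closeOf_succ_not_mem S e⟩)

lemma openSet_nonempty (S : Finset ℤ) (e : ℤ) :
    ((Finset.Icc (e - 1 - S.card) (e - 1)).filter (fun k => k ∉ S)).Nonempty := by
  by_contra h
  rw [Finset.not_nonempty_iff_eq_empty, Finset.filter_eq_empty_iff] at h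
  push_neg at h
  have hsub : Finset.Icc (e - 1 - S.card) (e - 1) ⊆ S := fun x hx => h hx
  have h1 := Finset.card_le_card hsub
  have h3 : (Finset.Icc (e - 1 - S.card) (e - 1)).card = (e - 1 + 1 - (e - 1 - S.card)).toNat :=
    Int.card_Icc _ _
  omega

/-- the opening edge of the run of `S` containing `e` -/
noncomputable def openOf (S : Finset ℤ) (e : ℤ) : ℤ :=
  ((Finset.Icc (e - 1 - S.card) (e - 1)).filter (fun k => k ∉ S)).max' (openSet_nonempty S e)

lemma openOf_lt (S : Finset ℤ) (e : ℤ) : openOf S e < e := by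
  have h := Finset.max'_mem _ (openSet_nonempty S e)
  have h2 := (Finset.mem_Icc.mp (Finset.mem_filter.mp h).1).2
  unfold openOf
  omega

lemma openOf_not_mem (S : Finset ℤ) (e : ℤ) : openOf S e ∉ S := by
  have := Finset.max'_mem _ (openSet_nonempty S e)
  exact (Finset.mem_filter.mp this).2

lemma openOf_interval {S : Finset ℤ} {e : ℤ} (he : e ∈ S) :
    ∀ i, openOf S e < i → i ≤ e → i ∈ S := by
  intro i h1 h2
  by_contra hi
  have hne : i ≠ e := by rintro rfl; exact hi he
  have hlb : e - 1 - S.card ≤ openOf S e := by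
    have := Finset.max'_mem _ (openSet_nonempty S e)
    have := (Finset.mem_filter.mp this).1
    exact (Finset.mem_Icc.mp this).1
  have hmem : i ∈ (Finset.Icc (e - 1 - S.card) (e - 1)).filter (fun k => k ∉ S) :=
    Finset.mem_filter.mpr ⟨Finset.mem_Icc.mpr ⟨by omega, by omega⟩, hi⟩
  have := Finset.le_max' _ _ hmem
  unfold openOf at h1
  omega

lemma openOf_succ_mem {S : Finset ℤ} {e : ℤ} (he : e ∈ S) : openOf S e + 1 ∈ S :=
  openOf_interval he _ (by omega) (by have := openOf_lt S e; omega)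

lemma openOf_mem_edges {S : Finset ℤ} {e : ℤ} (he : e ∈ S) : openOf S e ∈ edges S :=
  mem_edges.mpr (Or.inr ⟨openOf_not_mem S e, openOf_succ_mem he⟩)

lemma le_openOf {S : Finset ℤ} {e : ℤ} (he : e ∈ S) :
    ∀ g, g ∉ S → g < e → g ≤ openOf S e := by
  intro g hg hge
  rcases le_or_gt (e - 1 - S.card) g with h | h
  · exact Finset.le_max' _ _ (Finset.mem_filter.mpr
      ⟨Finset.mem_Icc.mpr ⟨h, by omega⟩, hg⟩)
  · have hlb : e - 1 - S.card ≤ openOf S e := by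
      have := Finset.max'_mem _ (openSet_nonempty S e)
      have := (Finset.mem_filter.mp this).1
      exact (Finset.mem_Icc.mp this).1
    omega

/-- least element of `S` above `a` (junk value if none) -/
def minAbove (S : Finset ℤ) (a : ℤ) : ℤ :=
  if h : (S.filter (fun p => a < p)).Nonempty then (S.filter (fun p => a < p)).min' h else 0

lemma exists_gt_of_card {S : Finset ℤ} (hS1 : ∀ i ∈ S, (1:ℤ) ≤ i) {a : ℤ}
    (h1 : 1 ≤ a) (h2 : a ≤ (S.card : ℤ)) (h3 : a ∉ S) :
    (S.filter (fun p => a < p)).Nonempty := by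
  by_contra h
  rw [Finset.not_nonempty_iff_eq_empty, Finset.filter_eq_empty_iff] at h
  push_neg at h
  have hsub : S ⊆ Finset.Icc 1 (a - 1) := by
    intro x hx
    have := hS1 x hx
    have hxa := h hx
    have : x ≠ a := by rintro rfl; exact h3 hx
    exact Finset.mem_Icc.mpr ⟨by omega, by omega⟩
  have h1' := Finset.card_le_card hsub
  have h3' : (Finset.Icc (1:ℤ) (a-1)).card = (a - 1 + 1 - 1).toNat := Int.card_Icc _ _
  omega

section MinAbove
variable {S : Finset ℤ} {a : ℤ}

lemma minAbove_mem (hne : (S.filter (fun p => a < p)).Nonempty) : minAbove S a ∈ S := by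
  rw [minAbove, dif_pos hne]
  exact (Finset.mem_filter.mp (Finset.min'_mem _ hne)).1

lemma lt_minAbove (hne : (S.filter (fun p => a < p)).Nonempty) : a < minAbove S a := by
  rw [minAbove, dif_pos hne]
  exact (Finset.mem_filter.mp (Finset.min'_mem _ hne)).2

lemma minAbove_min (hne : (S.filter (fun p => a < p)).Nonempty) : ∀ p ∈ S, a < p → minAbove S a ≤ p := by
  intro p hp hap
  rw [minAbove, dif_pos hne]
  exact Finset.min'_le _ _ (Finset.mem_filter.mpr ⟨hp, hap⟩)

lemma minAbove_pred_not_mem (hne : (S.filter (fun p => a < p)).Nonempty)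
    (ha : a ∉ S) : minAbove S a - 1 ∉ S := by
  intro hmem
  rcases lt_or_ge a (minAbove S a - 1) with h | h
  · have := minAbove_min hne _ hmem h; omega
  · have h2 := lt_minAbove hne
    have h3 : minAbove S a - 1 = a := by omega
    rw [h3] at hmem
    exact ha hmem

end MinAbove

variable {S : Finset ℤ}


lemma fcol_le_one (i : ℤ) : fcol S i ≤ 1 := by
  unfold fcol; split_ifs <;> omega

lemma neg_one_le_fcol (i : ℤ) : -1 ≤ fcol S i := by
  unfold fcol; split_ifs <;> omega

lemma fcol_eq_one_iff (i : ℤ) :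
    fcol S i = 1 ↔ (1 ≤ i ∧ i ≤ (S.card : ℤ) ∧ i ∉ S) := by
  unfold fcol
  by_cases h1 : 1 ≤ i ∧ i ≤ (S.card : ℤ) <;> by_cases h2 : i ∈ S <;>
    simp [h1, h2] <;> tauto

lemma fcol_eq_negone_iff (hS1 : ∀ i ∈ S, (1:ℤ) ≤ i) (i : ℤ) :
    fcol S i = -1 ↔ (i ∈ S ∧ (S.card : ℤ) < i) := by
  by_cases h2 : i ∈ S
  · have hi := hS1 i h2
    by_cases h1 : 1 ≤ i ∧ i ≤ (S.card : ℤ) <;> simp [fcol, h1, h2] <;> omega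
  · by_cases h1 : 1 ≤ i ∧ i ≤ (S.card : ℤ) <;> simp [fcol, h1, h2]

lemma y_one_of_fcol (hmem : i ∈ S) (h : 0 ≤ fcol S i) :
    1 ≤ i ∧ i ≤ (S.card : ℤ) := by
  unfold fcol at h
  by_cases h1 : 1 ≤ i ∧ i ≤ (S.card : ℤ)
  · exact h1
  · simp [h1, hmem] at h

lemma c_lt_of_fcol_zero_notmem (h : fcol S i = 0) (hmem : i ∉ S) (hi : 1 ≤ i) :
    (S.card : ℤ) < i := by
  unfold fcol at h
  by_cases h1 : 1 ≤ i ∧ i ≤ (S.card : ℤ)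
  · simp [h1, hmem] at h
  · omega



section Distinct
variable {S : Finset ℤ}

/-- the min-above element exists when `fcol a = 1` -/
lemma hne_of_fone (hS1 : ∀ i ∈ S, (1:ℤ) ≤ i) {a : ℤ} (ha : fcol S a = 1) :
    (S.filter (fun p => a < p)).Nonempty := by
  obtain ⟨h1, h2, h3⟩ := (fcol_eq_one_iff a).mp ha
  exact exists_gt_of_card hS1 h1 h2 h3

lemma one_le_openOf_of_neg (hS1 : ∀ i ∈ S, (1:ℤ) ≤ i) {b : ℤ}
    (hb : fcol S b = -1) : 1 ≤ openOf S b := by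
  obtain ⟨hbS, hcb⟩ := (fcol_eq_negone_iff hS1 b).mp hb
  by_contra h
  push_neg at h
  have hsub : Finset.Icc 1 b ⊆ S := by
    intro i hi
    have := Finset.mem_Icc.mp hi
    exact openOf_interval hbS i (by omega) (by omega)
  have := le_card_of_Icc_subset hsub
  omega

/-- (iv): two (1,-1) pairs have distinct opening edges -/
lemma dist_OO (hS1 : ∀ i ∈ S, (1:ℤ) ≤ i) {b1 a2 b2 : ℤ}
    (ha2 : fcol S a2 = 1) (hb2 : fcol S b2 = -1)
    (h12 : b1 < a2) (h22 : a2 < b2) : openOf S b1 < openOf S b2 := by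
  obtain ⟨_, _, ha2n⟩ := (fcol_eq_one_iff a2).mp ha2
  obtain ⟨hb2S, _⟩ := (fcol_eq_negone_iff hS1 b2).mp hb2
  have h1 := openOf_lt S b1
  have h2 := le_openOf hb2S a2 ha2n h22
  omega

/-- (v): a (1,0) pair before a (1,-1) pair -/
lemma dist_WO (hS1 : ∀ i ∈ S, (1:ℤ) ≤ i) {a1 b1 a2 b2 : ℤ}
    (ha1 : fcol S a1 = 1) (hb1 : fcol S b1 = 0)
    (ha2 : fcol S a2 = 1) (hb2 : fcol S b2 = -1)
    (h11 : a1 < b1) (h12 : b1 < a2) (h22 : a2 < b2) :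
    minAbove S a1 - 1 < openOf S b2 := by
  have hne1 := hne_of_fone hS1 ha1
  obtain ⟨ha1l, _, _⟩ := (fcol_eq_one_iff a1).mp ha1
  obtain ⟨ha2l, ha2c, ha2n⟩ := (fcol_eq_one_iff a2).mp ha2
  obtain ⟨hb2S, _⟩ := (fcol_eq_negone_iff hS1 b2).mp hb2
  by_cases hmem : b1 ∈ S
  · have h1 := minAbove_min hne1 b1 hmem h11
    have h2 := le_openOf hb2S a2 ha2n h22
    omega
  · have := c_lt_of_fcol_zero_notmem hb1 hmem (by omega)
    omega

/-- (vii)/(viii): two "min-above" witnesses are distinct -/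
lemma dist_WW (hS1 : ∀ i ∈ S, (1:ℤ) ≤ i) {a1 b1 a2 : ℤ}
    (ha1 : fcol S a1 = 1) (hb1 : fcol S b1 = 0)
    (ha2 : fcol S a2 = 1)
    (h11 : a1 < b1) (h12 : b1 ≤ a2) :
    minAbove S a1 ≠ minAbove S a2 := by
  intro heq
  have hne1 := hne_of_fone hS1 ha1
  have hne2 := hne_of_fone hS1 ha2
  obtain ⟨ha1l, _, _⟩ := (fcol_eq_one_iff a1).mp ha1
  obtain ⟨_, ha2c, _⟩ := (fcol_eq_one_iff a2).mp ha2
  by_cases hmem : b1 ∈ S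
  · have h1 := minAbove_min hne1 b1 hmem h11
    have h2 := lt_minAbove hne2
    omega
  · have := c_lt_of_fcol_zero_notmem hb1 hmem (by omega)
    omega

/-- (ix): first-run closing vs a (-1)-point closing -/
lemma dist_KC (hS1 : ∀ i ∈ S, (1:ℤ) ≤ i) (h1S : (1:ℤ) ∈ S) {b : ℤ}
    (hb : fcol S b = -1) : closeOf S 1 ≠ closeOf S b := by
  intro heq
  obtain ⟨hbS, hcb⟩ := (fcol_eq_negone_iff hS1 b).mp hb
  have hbK : b ≤ closeOf S 1 := by rw [heq]; exact le_closeOf S b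
  have hsub : Finset.Icc 1 b ⊆ S := by
    intro i hi
    have := Finset.mem_Icc.mp hi
    exact closeOf_interval h1S i (by omega) (by omega)
  have := le_card_of_Icc_subset hsub
  omega

/-- (x): first-run closing vs the last-point witness closing -/
lemma dist_KCstar (hS1 : ∀ i ∈ S, (1:ℤ) ≤ i) (h1S : (1:ℤ) ∈ S) {l : ℤ}
    (hl : fcol S l = 1) : closeOf S 1 ≠ closeOf S (minAbove S l) := by
  intro heq
  have hne := hne_of_fone hS1 hl
  obtain ⟨hll, _, hln⟩ := (fcol_eq_one_iff l).mp hl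
  have h1 := lt_minAbove hne
  have h2 := le_closeOf S (minAbove S l)
  have : l ∈ S := closeOf_interval h1S l (by omega) (by rw [heq]; omega)
  exact hln this

/-- (xi): two (-1)-point closings -/
lemma dist_CC (hS1 : ∀ i ∈ S, (1:ℤ) ≤ i) {b1 a2 b2 : ℤ}
    (hb1 : fcol S b1 = -1) (ha2 : 0 ≤ fcol S a2) (hb2 : fcol S b2 = -1)
    (h12 : b1 < a2) (h22 : a2 < b2) : closeOf S b1 ≠ closeOf S b2 := by
  intro heq
  obtain ⟨hb1S, hcb1⟩ := (fcol_eq_negone_iff hS1 b1).mp hb1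
  have h2 := le_closeOf S b2
  have ha2S : a2 ∈ S := closeOf_interval hb1S a2 (by omega) (by rw [heq]; omega)
  have := y_one_of_fcol ha2S ha2
  omega

/-- (xii): (-1)-point closing vs last-point witness closing -/
lemma dist_CCstar (hS1 : ∀ i ∈ S, (1:ℤ) ≤ i) {b1 l : ℤ}
    (hb1 : fcol S b1 = -1) (hl : fcol S l = 1) (h1l : b1 < l) :
    closeOf S b1 ≠ closeOf S (minAbove S l) := by
  intro heq
  have hne := hne_of_fone hS1 hl
  obtain ⟨hb1S, _⟩ := (fcol_eq_negone_iff hS1 b1).mp hb1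
  obtain ⟨_, _, hln⟩ := (fcol_eq_one_iff l).mp hl
  have h1 := lt_minAbove hne
  have h2 := le_closeOf S (minAbove S l)
  have : l ∈ S := closeOf_interval hb1S l (by omega) (by rw [heq]; omega)
  exact hln this

end Distinct


theorem core (S : Finset ℤ) (hS1 : ∀ i ∈ S, (1:ℤ) ≤ i)
    (t : ℕ) (j : ℕ → ℤ)
    (hmono : ∀ a b : ℕ, a < b → b ≤ 2*t → j a < j b)
    (hpos : ∀ s, s < t → 1 ≤ fcol S (j (2*s)) - fcol S (j (2*s+1)))
    (hlast : 0 ≤ fcol S (j (2*t))) :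
    2 * (if (1:ℤ) ∈ S then 1 else 0)
      + (∑ s ∈ Finset.range t, (fcol S (j (2*s)) - fcol S (j (2*s+1))))
      + 2 * fcol S (j (2*t)) ≤ ((edges S).card : ℤ) := by
  classical
  -- order facts
  have hab : ∀ s, s < t → j (2*s) < j (2*s+1) := fun s hs =>
    hmono _ _ (by omega) (by omega)
  have hblt : ∀ s, s < t → j (2*s+1) < j (2*t) := fun s hs =>
    hmono _ _ (by omega) (by omega)
  have hba : ∀ s s', s < s' → s' < t → j (2*s+1) < j (2*s') := fun s s' h h' =>
    hmono _ _ (by omega) (by omega)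
  -- branch facts
  have hfa1 : ∀ s, s < t → fcol S (j (2*s+1)) ≠ -1 → fcol S (j (2*s)) = 1 := by
    intro s hs h
    have h1 := hpos s hs
    have h2 := fcol_le_one (S := S) (j (2*s))
    have h3 := neg_one_le_fcol (S := S) (j (2*s+1))
    omega
  have hfb0 : ∀ s, s < t → fcol S (j (2*s+1)) ≠ -1 → fcol S (j (2*s+1)) = 0 := by
    intro s hs h
    have h1 := hpos s hs
    have h2 := fcol_le_one (S := S) (j (2*s))
    have h3 := neg_one_le_fcol (S := S) (j (2*s+1))
    omega
  have hfa0 : ∀ s, s < t → 0 ≤ fcol S (j (2*s)) := by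
    intro s hs
    have h1 := hpos s hs
    have h3 := neg_one_le_fcol (S := S) (j (2*s+1))
    omega
  -- demand sets
  set Po : ℕ → Finset ℤ := fun s =>
    if fcol S (j (2*s+1)) = -1 then
      (if fcol S (j (2*s)) = 1 then {openOf S (j (2*s+1))} else ∅)
    else {minAbove S (j (2*s)) - 1} with hPo
  set Pc : ℕ → Finset ℤ := fun s =>
    if fcol S (j (2*s+1)) = -1 then {closeOf S (j (2*s+1))} else ∅ with hPc
  set X1o : Finset ℤ := if (1:ℤ) ∈ S then {0} else ∅ with hX1o
  set X1c : Finset ℤ := if (1:ℤ) ∈ S then {closeOf S 1} else ∅ with hX1c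
  set Lo : Finset ℤ := if fcol S (j (2*t)) = 1 then {minAbove S (j (2*t)) - 1} else ∅ with hLo
  set Lc : Finset ℤ :=
    if fcol S (j (2*t)) = 1 then {closeOf S (minAbove S (j (2*t)))} else ∅ with hLc
  -- membership characterizations
  have hPo_mem : ∀ s k, k ∈ Po s ↔
      ((fcol S (j (2*s+1)) = -1 ∧ fcol S (j (2*s)) = 1 ∧ k = openOf S (j (2*s+1)))
       ∨ (fcol S (j (2*s+1)) ≠ -1 ∧ k = minAbove S (j (2*s)) - 1)) := by
    intro s k
    simp only [hPo]
    split_ifs with h1 h2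
    · simp [h1, h2]
    · simp [h1, h2]
    · simp [h1]
  have hPc_mem : ∀ s k, k ∈ Pc s ↔
      (fcol S (j (2*s+1)) = -1 ∧ k = closeOf S (j (2*s+1))) := by
    intro s k
    simp only [hPc]
    split_ifs with h1 <;> simp [h1]
  have hX1o_mem : ∀ k, k ∈ X1o ↔ ((1:ℤ) ∈ S ∧ k = 0) := by
    intro k; rw [hX1o]; split_ifs with h1 <;> simp [h1]
  have hX1c_mem : ∀ k, k ∈ X1c ↔ ((1:ℤ) ∈ S ∧ k = closeOf S 1) := by
    intro k; rw [hX1c]; split_ifs with h1 <;> simp [h1]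
  have hLo_mem : ∀ k, k ∈ Lo ↔ (fcol S (j (2*t)) = 1 ∧ k = minAbove S (j (2*t)) - 1) := by
    intro k; rw [hLo]; split_ifs with h1 <;> simp [h1]
  have hLc_mem : ∀ k, k ∈ Lc ↔
      (fcol S (j (2*t)) = 1 ∧ k = closeOf S (minAbove S (j (2*t)))) := by
    intro k; rw [hLc]; split_ifs with h1 <;> simp [h1]
  -- open side disjointness
  have hPoD : ∀ s1 s2, s1 < s2 → s2 < t → Disjoint (Po s1) (Po s2) := by
    intro s1 s2 h12 h2t
    have h1t : s1 < t := by omega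
    rw [Finset.disjoint_left]
    intro k hk1 hk2
    rw [hPo_mem] at hk1 hk2
    rcases hk1 with ⟨hb1, ha1, rfl⟩ | ⟨hb1, rfl⟩
    · rcases hk2 with ⟨hb2, ha2, heq⟩ | ⟨hb2, heq⟩
      · have := dist_OO hS1 ha2 hb2 (hba s1 s2 h12 h2t) (hab s2 h2t)
        omega
      · -- O_{s1} vs W_{s2}
        have ha2 := hfa1 s2 h2t hb2
        have hne2 := hne_of_fone hS1 ha2
        have h1 := openOf_lt S (j (2*s1+1))
        have h2 := lt_minAbove hne2
        have h3 := hba s1 s2 h12 h2t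
        omega
    · rcases hk2 with ⟨hb2, ha2, heq⟩ | ⟨hb2, heq⟩
      · have ha1 := hfa1 s1 h1t hb1
        have hb10 := hfb0 s1 h1t hb1
        have := dist_WO hS1 ha1 hb10 ha2 hb2 (hab s1 h1t) (hba s1 s2 h12 h2t)
          (hab s2 h2t)
        omega
      · have ha1 := hfa1 s1 h1t hb1
        have hb10 := hfb0 s1 h1t hb1
        have ha2 := hfa1 s2 h2t hb2
        have := dist_WW hS1 ha1 hb10 ha2 (hab s1 h1t)
          (le_of_lt (hba s1 s2 h12 h2t))
        omega
  have hPoDisj : ∀ s1 ∈ Finset.range t, ∀ s2 ∈ Finset.range t, s1 ≠ s2 →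
      Disjoint (Po s1) (Po s2) := by
    intro s1 hs1 s2 hs2 hne
    rcases lt_or_gt_of_ne hne with h | h
    · exact hPoD s1 s2 h (Finset.mem_range.mp hs2)
    · exact (hPoD s2 s1 h (Finset.mem_range.mp hs1)).symm
  have hX1oLo : Disjoint X1o Lo := by
    rw [Finset.disjoint_left]
    intro k hk1 hk2
    rw [hX1o_mem] at hk1
    rw [hLo_mem] at hk2
    obtain ⟨h1S, rfl⟩ := hk1
    obtain ⟨hl1, heq⟩ := hk2
    have hne := hne_of_fone hS1 hl1
    obtain ⟨hll, _, _⟩ := (fcol_eq_one_iff _).mp hl1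
    have := lt_minAbove hne
    omega
  have hXLoPo : Disjoint (X1o ∪ Lo) ((Finset.range t).biUnion Po) := by
    rw [Finset.disjoint_left]
    intro k hk1 hk2
    obtain ⟨s, hs, hks⟩ := Finset.mem_biUnion.mp hk2
    have hst := Finset.mem_range.mp hs
    rw [hPo_mem] at hks
    rcases Finset.mem_union.mp hk1 with hk | hk
    · obtain ⟨h1S, rfl⟩ := (hX1o_mem _).mp hk
      rcases hks with ⟨hb, ha, heq⟩ | ⟨hb, heq⟩
      · have := one_le_openOf_of_neg hS1 hb
        omega
      · have ha := hfa1 s hst hb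
        have hne := hne_of_fone hS1 ha
        obtain ⟨hal, _, _⟩ := (fcol_eq_one_iff _).mp ha
        have := lt_minAbove hne
        omega
    · obtain ⟨hl1, rfl⟩ := (hLo_mem _).mp hk
      have hnel := hne_of_fone hS1 hl1
      rcases hks with ⟨hb, ha, heq⟩ | ⟨hb, heq⟩
      · have h1 := openOf_lt S (j (2*s+1))
        have h2 := hblt s hst
        have h3 := lt_minAbove hnel
        omega
      · have ha := hfa1 s hst hb
        have hb0 := hfb0 s hst hb
        have := dist_WW hS1 ha hb0 hl1 (hab s hst) (le_of_lt (hblt s hst))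
        omega
  -- close side disjointness
  have hPcD : ∀ s1 s2, s1 < s2 → s2 < t → Disjoint (Pc s1) (Pc s2) := by
    intro s1 s2 h12 h2t
    rw [Finset.disjoint_left]
    intro k hk1 hk2
    obtain ⟨hb1, rfl⟩ := (hPc_mem _ _).mp hk1
    obtain ⟨hb2, heq⟩ := (hPc_mem _ _).mp hk2
    exact dist_CC hS1 hb1 (hfa0 s2 h2t) hb2 (hba s1 s2 h12 h2t) (hab s2 h2t) heq
  have hPcDisj : ∀ s1 ∈ Finset.range t, ∀ s2 ∈ Finset.range t, s1 ≠ s2 →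
      Disjoint (Pc s1) (Pc s2) := by
    intro s1 hs1 s2 hs2 hne
    rcases lt_or_gt_of_ne hne with h | h
    · exact hPcD s1 s2 h (Finset.mem_range.mp hs2)
    · exact (hPcD s2 s1 h (Finset.mem_range.mp hs1)).symm
  have hX1cLc : Disjoint X1c Lc := by
    rw [Finset.disjoint_left]
    intro k hk1 hk2
    obtain ⟨h1S, rfl⟩ := (hX1c_mem _).mp hk1
    obtain ⟨hl1, heq⟩ := (hLc_mem _).mp hk2
    exact dist_KCstar hS1 h1S hl1 heq
  have hXLcPc : Disjoint (X1c ∪ Lc) ((Finset.range t).biUnion Pc) := by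
    rw [Finset.disjoint_left]
    intro k hk1 hk2
    obtain ⟨s, hs, hks⟩ := Finset.mem_biUnion.mp hk2
    have hst := Finset.mem_range.mp hs
    obtain ⟨hb, heq⟩ := (hPc_mem _ _).mp hks
    rcases Finset.mem_union.mp hk1 with hk | hk
    · obtain ⟨h1S, rfl⟩ := (hX1c_mem _).mp hk
      exact dist_KC hS1 h1S hb heq
    · obtain ⟨hl1, rfl⟩ := (hLc_mem _).mp hk
      exact dist_CCstar hS1 hb hl1 (hblt s hst) heq.symm
  -- open/close separation
  have hDopen_not : ∀ k ∈ (X1o ∪ Lo) ∪ (Finset.range t).biUnion Po, k ∉ S := by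
    intro k hk
    rcases Finset.mem_union.mp hk with hk | hk
    · rcases Finset.mem_union.mp hk with hk | hk
      · obtain ⟨h1S, rfl⟩ := (hX1o_mem _).mp hk
        intro h0; have := hS1 0 h0; omega
      · obtain ⟨hl1, rfl⟩ := (hLo_mem _).mp hk
        obtain ⟨_, _, hln⟩ := (fcol_eq_one_iff _).mp hl1
        exact minAbove_pred_not_mem (hne_of_fone hS1 hl1) hln
    · obtain ⟨s, hs, hks⟩ := Finset.mem_biUnion.mp hk
      have hst := Finset.mem_range.mp hs
      rcases (hPo_mem _ _).mp hks with ⟨hb, ha, rfl⟩ | ⟨hb, rfl⟩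
      · exact openOf_not_mem S _
      · have ha := hfa1 s hst hb
        obtain ⟨_, _, han⟩ := (fcol_eq_one_iff _).mp ha
        exact minAbove_pred_not_mem (hne_of_fone hS1 ha) han
  have hDclose_mem : ∀ k ∈ (X1c ∪ Lc) ∪ (Finset.range t).biUnion Pc, k ∈ S := by
    intro k hk
    rcases Finset.mem_union.mp hk with hk | hk
    · rcases Finset.mem_union.mp hk with hk | hk
      · obtain ⟨h1S, rfl⟩ := (hX1c_mem _).mp hk
        exact closeOf_mem h1S
      · obtain ⟨hl1, rfl⟩ := (hLc_mem _).mp hk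
        exact closeOf_mem (minAbove_mem (hne_of_fone hS1 hl1))
    · obtain ⟨s, hs, hks⟩ := Finset.mem_biUnion.mp hk
      obtain ⟨hb, rfl⟩ := (hPc_mem _ _).mp hks
      obtain ⟨hbS, _⟩ := (fcol_eq_negone_iff hS1 _).mp hb
      exact closeOf_mem hbS
  have hOC : Disjoint ((X1o ∪ Lo) ∪ (Finset.range t).biUnion Po)
      ((X1c ∪ Lc) ∪ (Finset.range t).biUnion Pc) := by
    rw [Finset.disjoint_left]
    intro k hk1 hk2
    exact hDopen_not k hk1 (hDclose_mem k hk2)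
  -- subset of edges
  have hsub : ((X1o ∪ Lo) ∪ (Finset.range t).biUnion Po) ∪
      ((X1c ∪ Lc) ∪ (Finset.range t).biUnion Pc) ⊆ edges S := by
    intro k hk
    rcases Finset.mem_union.mp hk with hk | hk
    · rcases Finset.mem_union.mp hk with hk | hk
      · rcases Finset.mem_union.mp hk with hk | hk
        · obtain ⟨h1S, rfl⟩ := (hX1o_mem _).mp hk
          refine mem_edges.mpr (Or.inr ⟨fun h0 => ?_, by norm_num [h1S]⟩)
          have := hS1 0 h0; omega
        · obtain ⟨hl1, rfl⟩ := (hLo_mem _).mp hk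
          obtain ⟨_, _, hln⟩ := (fcol_eq_one_iff _).mp hl1
          have hne := hne_of_fone hS1 hl1
          refine mem_edges.mpr (Or.inr ⟨minAbove_pred_not_mem hne hln, ?_⟩)
          have h1 : minAbove S (j (2*t)) - 1 + 1 = minAbove S (j (2*t)) := by ring
          rw [h1]
          exact minAbove_mem hne
      · obtain ⟨s, hs, hks⟩ := Finset.mem_biUnion.mp hk
        have hst := Finset.mem_range.mp hs
        rcases (hPo_mem _ _).mp hks with ⟨hb, ha, rfl⟩ | ⟨hb, rfl⟩
        · obtain ⟨hbS, _⟩ := (fcol_eq_negone_iff hS1 _).mp hb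
          exact openOf_mem_edges hbS
        · have ha := hfa1 s hst hb
          obtain ⟨_, _, han⟩ := (fcol_eq_one_iff _).mp ha
          have hne := hne_of_fone hS1 ha
          refine mem_edges.mpr (Or.inr ⟨minAbove_pred_not_mem hne han, ?_⟩)
          have h1 : minAbove S (j (2*s)) - 1 + 1 = minAbove S (j (2*s)) := by ring
          rw [h1]
          exact minAbove_mem hne
    · rcases Finset.mem_union.mp hk with hk | hk
      · rcases Finset.mem_union.mp hk with hk | hk
        · obtain ⟨h1S, rfl⟩ := (hX1c_mem _).mp hk
          exact closeOf_mem_edges h1S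
        · obtain ⟨hl1, rfl⟩ := (hLc_mem _).mp hk
          exact closeOf_mem_edges (minAbove_mem (hne_of_fone hS1 hl1))
      · obtain ⟨s, hs, hks⟩ := Finset.mem_biUnion.mp hk
        obtain ⟨hb, rfl⟩ := (hPc_mem _ _).mp hks
        obtain ⟨hbS, _⟩ := (fcol_eq_negone_iff hS1 _).mp hb
        exact closeOf_mem_edges hbS
  -- cardinalities
  have hcard1 : (((X1o ∪ Lo) ∪ (Finset.range t).biUnion Po) ∪
      ((X1c ∪ Lc) ∪ (Finset.range t).biUnion Pc)).card ≤ (edges S).card :=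
    Finset.card_le_card hsub
  rw [Finset.card_union_of_disjoint hOC,
      Finset.card_union_of_disjoint hXLoPo,
      Finset.card_union_of_disjoint hXLcPc,
      Finset.card_union_of_disjoint hX1oLo,
      Finset.card_union_of_disjoint hX1cLc,
      Finset.card_biUnion hPoDisj,
      Finset.card_biUnion hPcDisj] at hcard1
  -- piecewise lower bounds
  have hX : 2 * (if (1:ℤ) ∈ S then 1 else 0) = (X1o.card : ℤ) + (X1c.card : ℤ) := by
    rw [hX1o, hX1c]
    split_ifs with h1 <;> simp
  have hL : 2 * fcol S (j (2*t)) ≤ (Lo.card : ℤ) + (Lc.card : ℤ) := by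
    rw [hLo, hLc]
    have := fcol_le_one (S := S) (j (2*t))
    split_ifs with h1 <;> simp <;> omega
  have hP : ∀ s ∈ Finset.range t,
      fcol S (j (2*s)) - fcol S (j (2*s+1)) ≤ ((Po s).card : ℤ) + ((Pc s).card : ℤ) := by
    intro s hs
    have hst := Finset.mem_range.mp hs
    have h1 := fcol_le_one (S := S) (j (2*s))
    have h2 := neg_one_le_fcol (S := S) (j (2*s+1))
    rw [hPo, hPc]
    by_cases hb : fcol S (j (2*s+1)) = -1
    · by_cases ha : fcol S (j (2*s)) = 1 <;> simp [hb, ha] <;> omega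
    · have hb0 := hfb0 s hst hb
      simp [hb]
      omega
  have hsum : (∑ s ∈ Finset.range t, (fcol S (j (2*s)) - fcol S (j (2*s+1))))
      ≤ ∑ s ∈ Finset.range t, (((Po s).card : ℤ) + ((Pc s).card : ℤ)) :=
    Finset.sum_le_sum hP
  have hcard2 : ((X1o.card : ℤ) + (Lo.card : ℤ) + ∑ s ∈ Finset.range t, ((Po s).card : ℤ))
      + ((X1c.card : ℤ) + (Lc.card : ℤ) + ∑ s ∈ Finset.range t, ((Pc s).card : ℤ))
      ≤ ((edges S).card : ℤ) := by exact_mod_cast hcard1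
  rw [Finset.sum_add_distrib] at hsum
  omega


lemma sum_drop (g : ℕ → ℤ) (s t' : ℕ) (hs : s ≤ t') :
    (∑ u ∈ Finset.range t', if u < s then g u else g (u+1))
      = (∑ u ∈ Finset.range (t'+1), g u) - g s := by
  induction t', hs using Nat.le_induction with
  | base =>
    rw [Finset.sum_range_succ]
    have : ∀ u ∈ Finset.range s, (if u < s then g u else g (u+1)) = g u := by
      intro u hu
      rw [if_pos (Finset.mem_range.mp hu)]
    rw [Finset.sum_congr rfl this]
    ring
  | succ n hn ih =>
    rw [Finset.sum_range_succ, ih, Finset.sum_range_succ (n := n+1),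
      if_neg (by omega)]
    ring

theorem col_bound (S : Finset ℤ) (M : ℤ) (hM : 0 ≤ M)
    (hS : ∀ i ∈ S, (1:ℤ) ≤ i ∧ i ≤ M)
    (t : ℕ) (j : ℕ → ℤ)
    (hmono : ∀ a b : ℕ, a < b → b ≤ 2*t → j a < j b)
    (hrange : ∀ s, s ≤ 2*t → 0 ≤ j s ∧ j s ≤ M + 1) :
    2 * (if (1:ℤ) ∈ S then 1 else 0)
      + (∑ s ∈ Finset.range t, (fcol S (j (2*s)) - fcol S (j (2*s+1))))
      + 2 * fcol S (j (2*t)) ≤ ((edges S).card : ℤ) := by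
  have hS1 : ∀ i ∈ S, (1:ℤ) ≤ i := fun i hi => (hS i hi).1
  induction t using Nat.strong_induction_on generalizing j with
  | _ t IH =>
  by_cases hbad : ∃ s, s < t ∧ fcol S (j (2*s)) - fcol S (j (2*s+1)) ≤ 0
  · obtain ⟨s, hst, hval⟩ := hbad
    obtain ⟨t', rfl⟩ : ∃ t', t = t' + 1 := ⟨t - 1, by omega⟩
    have hst' : s ≤ t' := by omega
    set j' : ℕ → ℤ := fun k => if k < 2*s then j k else j (k+2) with hj'
    have hmono' : ∀ a b : ℕ, a < b → b ≤ 2*t' → j' a < j' b := by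
      intro a b h1 h2
      simp only [hj']
      split_ifs with ha hb hb
      · exact hmono a b h1 (by omega)
      · exact hmono a (b+2) (by omega) (by omega)
      · exact absurd h1 (by omega)
      · exact hmono (a+2) (b+2) (by omega) (by omega)
    have hrange' : ∀ u, u ≤ 2*t' → 0 ≤ j' u ∧ j' u ≤ M + 1 := by
      intro u hu
      simp only [hj']
      split_ifs with h1
      · exact hrange u (by omega)
      · exact hrange (u+2) (by omega)
    have hIH := IH t' (by omega) j' hmono' hrange'
    have hterm : ∀ u ∈ Finset.range t',
        fcol S (j' (2*u)) - fcol S (j' (2*u+1))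
          = if u < s then (fcol S (j (2*u)) - fcol S (j (2*u+1)))
            else (fcol S (j (2*(u+1))) - fcol S (j (2*(u+1)+1))) := by
      intro u hu
      by_cases h : u < s
      · rw [if_pos h]
        simp only [hj']
        rw [if_pos (by omega), if_pos (by omega)]
      · rw [if_neg h]
        simp only [hj']
        rw [if_neg (by omega), if_neg (by omega)]
        have e1 : 2*u+2 = 2*(u+1) := by ring
        have e2 : 2*u+1+2 = 2*(u+1)+1 := by ring
        rw [e1, e2]
    have hsum : (∑ u ∈ Finset.range t', (fcol S (j' (2*u)) - fcol S (j' (2*u+1))))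
        = (∑ u ∈ Finset.range (t'+1), (fcol S (j (2*u)) - fcol S (j (2*u+1))))
          - (fcol S (j (2*s)) - fcol S (j (2*s+1))) := by
      rw [Finset.sum_congr rfl hterm]
      exact sum_drop (fun u => fcol S (j (2*u)) - fcol S (j (2*u+1))) s t' hst'
    have hlast_eq : j' (2*t') = j (2*(t'+1)) := by
      simp only [hj']
      rw [if_neg (by omega)]
      have e1 : 2*t'+2 = 2*(t'+1) := by ring
      rw [e1]
    rw [hsum, hlast_eq] at hIH
    omega
  · push_neg at hbad
    have hpos : ∀ s, s < t → 1 ≤ fcol S (j (2*s)) - fcol S (j (2*s+1)) := by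
      intro s hs
      have := hbad s hs
      omega
    by_cases hl : fcol S (j (2*t)) = -1
    · have hcM : (S.card : ℤ) ≤ M := by
        have hsub : S ⊆ Finset.Icc 1 M := fun i hi => Finset.mem_Icc.mpr (hS i hi)
        have h1 := Finset.card_le_card hsub
        have h2 : (Finset.Icc (1:ℤ) M).card = (M + 1 - 1).toNat := Int.card_Icc _ _
        omega
      have hM1 : M + 1 ∉ S := fun h => by have := (hS _ h).2; omega
      have hfM1 : fcol S (M+1) = 0 := by
        unfold fcol
        rw [if_neg (by push_neg; intro _; omega), if_neg hM1]
        ring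
      set j' : ℕ → ℤ := fun k => if k = 2*t then M + 1 else j k with hj'
      have hmono' : ∀ a b : ℕ, a < b → b ≤ 2*t → j' a < j' b := by
        intro a b h1 h2
        simp only [hj']
        split_ifs with ha hb
        · omega
        · omega
        · have h3 := hmono a (2*t) (by omega) (by omega)
          have h4 := (hrange (2*t) le_rfl).2
          omega
        · exact hmono a b h1 h2
      have hpos' : ∀ s, s < t → 1 ≤ fcol S (j' (2*s)) - fcol S (j' (2*s+1)) := by
        intro s hs
        simp only [hj']
        rw [if_neg (by omega), if_neg (by omega)]
        exact hpos s hs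
      have hlast' : 0 ≤ fcol S (j' (2*t)) := by
        simp [hj', hfM1]
      have hcore := core S hS1 t j' hmono' hpos' hlast'
      have hsum_eq : (∑ u ∈ Finset.range t, (fcol S (j' (2*u)) - fcol S (j' (2*u+1))))
          = ∑ u ∈ Finset.range t, (fcol S (j (2*u)) - fcol S (j (2*u+1))) := by
        apply Finset.sum_congr rfl
        intro u hu
        have hut := Finset.mem_range.mp hu
        simp only [hj']
        rw [if_neg (by omega), if_neg (by omega)]
      have hlast_eq : j' (2*t) = M + 1 := by simp [hj']
      rw [hsum_eq, hlast_eq, hfM1] at hcore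
      omega
    · have hlast' : 0 ≤ fcol S (j (2*t)) := by
        have := neg_one_le_fcol (S := S) (j (2*t))
        omega
      exact core S hS1 t j hmono hpos hlast'

def colSet (F : Finset (ℤ × ℤ)) (j : ℤ) : Finset ℤ :=
  (F.filter (fun p => p.2 = j)).image Prod.fst

lemma mem_colSet {F : Finset (ℤ × ℤ)} {i j : ℤ} : i ∈ colSet F j ↔ (i, j) ∈ F := by
  unfold colSet
  simp only [Finset.mem_image, Finset.mem_filter]
  constructor
  · rintro ⟨⟨p1, p2⟩, ⟨hpF, hp2⟩, hp1⟩
    simp only at hp1 hp2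
    rw [← hp1, ← hp2]
    exact hpF
  · intro h; exact ⟨(i, j), ⟨h, rfl⟩, rfl⟩

lemma card_colSet (F : Finset (ℤ × ℤ)) (j : ℤ) : (colSet F j).card = colSum F j := by
  unfold colSet colSum
  apply Finset.card_image_of_injOn
  rintro ⟨p1, p2⟩ hp ⟨q1, q2⟩ hq hpq
  have hp2 := (Finset.mem_filter.mp hp).2
  have hq2 := (Finset.mem_filter.mp hq).2
  simp only at hp2 hq2 hpq
  simp [hpq, hp2, hq2]

lemma card_filter_int {α : Type*} (s : Finset α) (p : α → Prop) [DecidablePred p] :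
    ((s.filter p).card : ℤ) = ∑ a ∈ s, (if p a then (1:ℤ) else 0) := by
  rw [Finset.card_filter]
  push_cast
  apply Finset.sum_congr rfl
  intro a _
  split_ifs <;> simp

lemma rowSum_int (F : Finset (ℤ × ℤ)) (n : ℤ)
    (hF : ∀ p ∈ F, p.2 ∈ Finset.Icc 1 n) (i : ℤ) :
    ((rowSum F i : ℤ)) = ∑ jc ∈ Finset.Icc (1:ℤ) n, (if (i, jc) ∈ F then (1:ℤ) else 0) := by
  unfold rowSum
  have hcard : (F.filter (fun p => p.1 = i)).card
      = ((Finset.Icc (1:ℤ) n).filter (fun jc => (i, jc) ∈ F)).card := by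
    apply Finset.card_bij (fun p _ => p.2)
    · rintro ⟨p1, p2⟩ hp
      have hp1 := (Finset.mem_filter.mp hp).1
      have hp2 := (Finset.mem_filter.mp hp).2
      simp only at hp2
      subst hp2
      exact Finset.mem_filter.mpr ⟨hF _ hp1, hp1⟩
    · rintro ⟨p1, p2⟩ hp ⟨q1, q2⟩ hq hpq
      have hp2 := (Finset.mem_filter.mp hp).2
      have hq2 := (Finset.mem_filter.mp hq).2
      simp only at hp2 hq2 hpq
      simp [hpq, hp2, hq2]
    · intro jc hjc
      exact ⟨(i, jc), Finset.mem_filter.mpr ⟨(Finset.mem_filter.mp hjc).2, rfl⟩, rfl⟩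
  rw [hcard, card_filter_int]

lemma boundary_card (F : Finset (ℤ × ℤ)) (n : ℤ)
    (hF : ∀ p ∈ F, p.2 ∈ Finset.Icc 1 n) :
    horizBoundaryLen F = ∑ jc ∈ Finset.Icc (1:ℤ) n, (edges (colSet F jc)).card := by
  classical
  set emb : ℤ → ℤ → (ℤ × ℤ) × (ℤ × ℤ) := fun jc k =>
    if k ∈ colSet F jc then ((k, jc), (k+1, jc)) else ((k+1, jc), (k, jc)) with hemb
  set GB : Finset ((ℤ × ℤ) × (ℤ × ℤ)) :=
    (Finset.Icc (1:ℤ) n).biUnion (fun jc => (edges (colSet F jc)).image (emb jc)) with hGB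
  have hemb_snd : ∀ jc k, (emb jc k).1.2 = jc := by
    intro jc k
    simp only [hemb]
    split_ifs <;> rfl
  have hset : {q : (ℤ × ℤ) × (ℤ × ℤ) |
      q.1.2 = q.2.2 ∧ |q.1.1 - q.2.1| = 1 ∧ q.1 ∈ F ∧ q.2 ∉ F} = ↑GB := by
    ext ⟨⟨i1, j1⟩, ⟨i2, j2⟩⟩
    simp only [Set.mem_setOf_eq, Finset.coe_biUnion, Set.mem_iUnion, Finset.mem_coe,
      Finset.mem_image, hGB, Finset.mem_biUnion]
    constructor
    · rintro ⟨hj, habs, hmem, hnot⟩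
      have hj' : j1 = j2 := hj
      subst hj'
      have hj1 : j1 ∈ Finset.Icc (1:ℤ) n := hF _ hmem
      have h1S : i1 ∈ colSet F j1 := mem_colSet.mpr hmem
      have h2S : i2 ∉ colSet F j1 := fun h => hnot (mem_colSet.mp h)
      rcases (abs_eq (by norm_num : (0:ℤ) ≤ 1)).mp habs with h | h
      · -- i1 - i2 = 1, k = i2
        refine ⟨j1, hj1, i2, ?_, ?_⟩
        · apply mem_edges.mpr
          right
          have : i2 + 1 = i1 := by omega
          rw [this]
          exact ⟨h2S, h1S⟩
        · simp only [hemb]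
          rw [if_neg h2S]
          have : i2 + 1 = i1 := by omega
          rw [this]
      · -- i1 - i2 = -1, k = i1
        refine ⟨j1, hj1, i1, ?_, ?_⟩
        · apply mem_edges.mpr
          left
          have : i1 + 1 = i2 := by omega
          rw [this]
          exact ⟨h1S, h2S⟩
        · simp only [hemb]
          rw [if_pos h1S]
          have : i1 + 1 = i2 := by omega
          rw [this]
    · rintro ⟨jc, hjc, k, hk, heq⟩
      rcases mem_edges.mp hk with ⟨h1, h2⟩ | ⟨h1, h2⟩
      · simp only [hemb, if_pos h1, Prod.mk.injEq] at heq
        obtain ⟨⟨e1, e2⟩, e3, e4⟩ := heq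
        subst e1; subst e2; subst e3; subst e4
        refine ⟨rfl, ?_, mem_colSet.mp h1, fun h => h2 (mem_colSet.mpr h)⟩
        rw [show k - (k+1) = -1 by ring]
        norm_num
      · simp only [hemb, if_neg h1, Prod.mk.injEq] at heq
        obtain ⟨⟨e1, e2⟩, e3, e4⟩ := heq
        subst e1; subst e2; subst e3; subst e4
        refine ⟨rfl, ?_, mem_colSet.mp h2, fun h => h1 (mem_colSet.mpr h)⟩
        rw [show k + 1 - k = 1 by ring]
        norm_num
  unfold horizBoundaryLen
  rw [hset, Set.ncard_coe_finset, hGB]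
  rw [Finset.card_biUnion]
  · apply Finset.sum_congr rfl
    intro jc _
    apply Finset.card_image_of_injOn
    intro k1 _ k2 _ heq
    by_cases c1 : k1 ∈ colSet F jc <;> by_cases c2 : k2 ∈ colSet F jc <;>
      simp only [hemb, c1, c2, if_true, if_false, Prod.mk.injEq] at heq <;> omega
  · intro jc1 _ jc2 _ hne
    rw [Function.onFun, Finset.disjoint_left]
    intro q hq1 hq2
    obtain ⟨k1, _, rfl⟩ := Finset.mem_image.mp hq1
    obtain ⟨k2, _, heq⟩ := Finset.mem_image.mp hq2
    apply hne
    have h1 := hemb_snd jc1 k1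
    have h2 := hemb_snd jc2 k2
    rw [heq] at h2
    exact h1.symm.trans h2

end Bdry


/-- Corollary 1, inequality (3): the general lower bound
`L_h ≥ 2 r_1 + d_{i_1} - d_{i_2} + d_{i_3} - ⋯ - d_{i_{2t}} + 2 d_{i_{2t+1}}`,
where now `d_0 = d_{m+1} = 0` and indices are chosen from `{0, 1, …, m, m+1}`.
Here `idx 0, idx 1, …, idx (2t)` play the role of `i_1 < i_2 < ⋯ < i_{2t+1}`. -/
theorem boundary_lower_bound_general_one (m n : ℕ) (hm : 0 < m) (hn : 0 < n)
    (F : Finset (ℤ × ℤ))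
    (hF : ∀ p ∈ F, p.1 ∈ Finset.Icc (1 : ℤ) (m : ℤ) ∧ p.2 ∈ Finset.Icc (1 : ℤ) (n : ℤ))
    (b : ℤ → ℕ)
    (hb : ∀ i : ℤ, b i = ((Finset.Icc (1 : ℤ) (n : ℤ)).filter fun j => i ≤ (colSum F j : ℤ)).card)
    (d : ℤ → ℤ)
    (hd : ∀ i : ℤ, 1 ≤ i → i ≤ (m : ℤ) → d i = (b i : ℤ) - (rowSum F i : ℤ))
    (hd0 : d 0 = 0) (hdm1 : d ((m : ℤ) + 1) = 0)
    (t : ℕ) (idx : ℕ → ℤ)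
    (hidx_mono : ∀ a b : ℕ, a < b → b ≤ 2 * t → idx a < idx b)
    (hidx_range : ∀ s : ℕ, s ≤ 2 * t → idx s ∈ Finset.Icc (0 : ℤ) ((m : ℤ) + 1)) :
    (horizBoundaryLen F : ℤ) ≥
      2 * (rowSum F 1 : ℤ)
        + (∑ s ∈ Finset.range t, (d (idx (2 * s)) - d (idx (2 * s + 1))))
        + 2 * d (idx (2 * t)) := by
  classical
  have hFcol : ∀ p ∈ F, p.2 ∈ Finset.Icc (1:ℤ) (n:ℤ) := fun p hp => (hF p hp).2
  have hScol : ∀ jc : ℤ, ∀ i ∈ Bdry.colSet F jc, (1:ℤ) ≤ i ∧ i ≤ (m:ℤ) := by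
    intro jc i hi
    exact Finset.mem_Icc.mp (hF _ (Bdry.mem_colSet.mp hi)).1
  have hcle : ∀ jc : ℤ, ((Bdry.colSet F jc).card : ℤ) ≤ (m:ℤ) := by
    intro jc
    have hsub : Bdry.colSet F jc ⊆ Finset.Icc 1 (m:ℤ) := fun i hi =>
      Finset.mem_Icc.mpr (hScol jc i hi)
    have h1 := Finset.card_le_card hsub
    have h2 : (Finset.Icc (1:ℤ) (m:ℤ)).card = ((m:ℤ) + 1 - 1).toNat := Int.card_Icc _ _
    omega
  have hdsum : ∀ i : ℤ, 0 ≤ i → i ≤ (m:ℤ) + 1 →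
      d i = ∑ jc ∈ Finset.Icc (1:ℤ) (n:ℤ), Bdry.fcol (Bdry.colSet F jc) i := by
    intro i h0 h1
    by_cases hi0 : i = 0
    · subst hi0
      rw [hd0]
      symm
      apply Finset.sum_eq_zero
      intro jc _
      unfold Bdry.fcol
      rw [if_neg (by omega), if_neg (fun hmem => by have := (hScol jc 0 hmem).1; omega)]
      ring
    · by_cases him : i = (m:ℤ) + 1
      · subst him
        rw [hdm1]
        symm
        apply Finset.sum_eq_zero
        intro jc _
        unfold Bdry.fcol
        rw [if_neg (fun hh => by have := hcle jc; omega),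
          if_neg (fun hmem => by have := (hScol jc _ hmem).2; omega)]
        ring
      · rw [hd i (by omega) (by omega)]
        have hbi : (b i : ℤ) = ∑ jc ∈ Finset.Icc (1:ℤ) (n:ℤ),
            (if 1 ≤ i ∧ i ≤ ((Bdry.colSet F jc).card : ℤ) then (1:ℤ) else 0) := by
          rw [hb i, Bdry.card_filter_int]
          apply Finset.sum_congr rfl
          intro jc _
          have hc : ((colSum F jc : ℤ)) = ((Bdry.colSet F jc).card : ℤ) := by
            rw [Bdry.card_colSet]
          rw [hc]
          split_ifs <;> omega
        have hri : (rowSum F i : ℤ) = ∑ jc ∈ Finset.Icc (1:ℤ) (n:ℤ),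
            (if i ∈ Bdry.colSet F jc then (1:ℤ) else 0) := by
          rw [Bdry.rowSum_int F (n:ℤ) hFcol i]
          apply Finset.sum_congr rfl
          intro jc _
          exact if_congr Bdry.mem_colSet.symm rfl rfl
        rw [hbi, hri, ← Finset.sum_sub_distrib]
        apply Finset.sum_congr rfl
        intro jc _
        rfl
  have hLh : (horizBoundaryLen F : ℤ)
      = ∑ jc ∈ Finset.Icc (1:ℤ) (n:ℤ), ((Bdry.edges (Bdry.colSet F jc)).card : ℤ) := by
    rw [Bdry.boundary_card F (n:ℤ) hFcol]
    push_cast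
    rfl
  have hr1 : (rowSum F 1 : ℤ) = ∑ jc ∈ Finset.Icc (1:ℤ) (n:ℤ),
      (if (1:ℤ) ∈ Bdry.colSet F jc then (1:ℤ) else 0) := by
    rw [Bdry.rowSum_int F (n:ℤ) hFcol 1]
    apply Finset.sum_congr rfl
    intro jc _
    exact if_congr Bdry.mem_colSet.symm rfl rfl
  have hcol : ∀ jc ∈ Finset.Icc (1:ℤ) (n:ℤ),
      2 * (if (1:ℤ) ∈ Bdry.colSet F jc then (1:ℤ) else 0)
        + (∑ s ∈ Finset.range t, (Bdry.fcol (Bdry.colSet F jc) (idx (2*s))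
            - Bdry.fcol (Bdry.colSet F jc) (idx (2*s+1))))
        + 2 * Bdry.fcol (Bdry.colSet F jc) (idx (2*t))
      ≤ ((Bdry.edges (Bdry.colSet F jc)).card : ℤ) := by
    intro jc _
    apply Bdry.col_bound _ (m:ℤ) (by positivity) (hScol jc) t idx hidx_mono
    intro s hs
    have := Finset.mem_Icc.mp (hidx_range s hs)
    exact ⟨this.1, this.2⟩
  have hsumcol := Finset.sum_le_sum hcol
  have hmid : ∑ jc ∈ Finset.Icc (1:ℤ) (n:ℤ), ∑ s ∈ Finset.range t,
        (Bdry.fcol (Bdry.colSet F jc) (idx (2*s)) - Bdry.fcol (Bdry.colSet F jc) (idx (2*s+1)))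
      = ∑ s ∈ Finset.range t, (d (idx (2*s)) - d (idx (2*s+1))) := by
    rw [Finset.sum_comm]
    apply Finset.sum_congr rfl
    intro s hs
    have hs' := Finset.mem_range.mp hs
    have r1 := Finset.mem_Icc.mp (hidx_range (2*s) (by omega))
    have r2 := Finset.mem_Icc.mp (hidx_range (2*s+1) (by omega))
    rw [Finset.sum_sub_distrib, ← hdsum _ r1.1 r1.2, ← hdsum _ r2.1 r2.2]
  have hlastsum : ∑ jc ∈ Finset.Icc (1:ℤ) (n:ℤ), Bdry.fcol (Bdry.colSet F jc) (idx (2*t))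
      = d (idx (2*t)) := by
    have r := Finset.mem_Icc.mp (hidx_range (2*t) le_rfl)
    rw [← hdsum _ r.1 r.2]
  have e1 : ∑ jc ∈ Finset.Icc (1:ℤ) (n:ℤ),
      (2 * (if (1:ℤ) ∈ Bdry.colSet F jc then (1:ℤ) else 0)
        + (∑ s ∈ Finset.range t, (Bdry.fcol (Bdry.colSet F jc) (idx (2*s))
            - Bdry.fcol (Bdry.colSet F jc) (idx (2*s+1))))
        + 2 * Bdry.fcol (Bdry.colSet F jc) (idx (2*t)))
      = 2 * (rowSum F 1 : ℤ)
        + (∑ s ∈ Finset.range t, (d (idx (2 * s)) - d (idx (2 * s + 1))))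
        + 2 * d (idx (2 * t)) := by
    rw [Finset.sum_add_distrib, Finset.sum_add_distrib, ← Finset.mul_sum, ← Finset.mul_sum,
      hmid, hlastsum, ← hr1]
  rw [ge_iff_le, hLh, ← e1]
  exact hsumcol
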